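/- Let 0 < q < 1, λ > 0, 0 < p < 1, and let (a_n)_{n≥0} be a nonnegative sequence, not identically zero, with ∑_{n≥0} a_n^p < ∞. Then ∑_{n=0}^∞ (q^{-λn} ∑_{k=n}^∞ q^{λk} a_k)^p > (1-q^λ)^{-p} ∑_{n=0}^∞ (1 - q^{λn}) a_n^p. -/

import Mathlib

open scoped ENNReal

open MeasureTheory in
lemma copson_holder_step {p : ℝ} (hp0 : 0 < p) (hp1 : p < 1) {R : ℝ≥0∞} (hR0 : R ≠ 0)
    (hRt : R ≠ ⊤) (b : ℕ → ℝ≥0∞) :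
    ∑' m : ℕ, R ^ m * b m ^ p
      ≤ (∑' m : ℕ, R ^ m) ^ (1 - p) * (∑' m : ℕ, R ^ m * b m) ^ p := by
  have h1p : 0 < 1 - p := by linarith
  have hconj : (1 / (1 - p)).HolderConjugate (1 / p) :=
    Real.holderConjugate_one_div h1p hp0 (by ring)
  have hRm0 : ∀ m : ℕ, (R : ℝ≥0∞) ^ m ≠ 0 := fun m => pow_ne_zero m hR0
  have hRmt : ∀ m : ℕ, (R : ℝ≥0∞) ^ m ≠ ⊤ := fun m => ENNReal.pow_ne_top hRt
  have key := ENNReal.lintegral_mul_le_Lp_mul_Lq (Measure.count : Measure ℕ) hconj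
    (f := fun m => (R ^ m) ^ (1 - p)) (g := fun m => (R ^ m * b m) ^ p)
    measurable_from_top.aemeasurable measurable_from_top.aemeasurable
  simp only [Pi.mul_apply] at key
  rw [lintegral_count, lintegral_count, lintegral_count] at key
  have e1 : ∀ m : ℕ, (R ^ m) ^ (1 - p) * (R ^ m * b m) ^ p = R ^ m * b m ^ p := by
    intro m
    rw [ENNReal.mul_rpow_of_nonneg _ _ hp0.le, ← mul_assoc,
      ← ENNReal.rpow_add _ _ (hRm0 m) (hRmt m)]
    norm_num
  have e2 : ∀ m : ℕ, ((R ^ m) ^ (1 - p)) ^ (1 / (1 - p)) = R ^ m := by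
    intro m
    rw [← ENNReal.rpow_mul, mul_one_div_cancel h1p.ne', ENNReal.rpow_one]
  have e3 : ∀ m : ℕ, ((R ^ m * b m) ^ p) ^ (1 / p) = R ^ m * b m := by
    intro m
    rw [← ENNReal.rpow_mul, mul_one_div_cancel hp0.ne', ENNReal.rpow_one]
  simp only [e1, e2, e3, one_div_one_div] at key
  exact key

lemma copson_swap_sum (g h : ℕ → ℝ≥0∞) :
    ∑' n : ℕ, ∑' m : ℕ, g m * h (n + m)
      = ∑' k : ℕ, (∑ m ∈ Finset.range (k + 1), g m) * h k := by
  have step1 : ∀ n : ℕ, ∑' m : ℕ, g m * h (n + m)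
      = ∑' k : ℕ, if n ≤ k then g (k - n) * h k else 0 := by
    intro n
    have hinj : Function.Injective (fun m : ℕ => n + m) := fun a b hab => by
      simpa using hab
    rw [← Function.Injective.tsum_eq hinj
      (f := fun k => if n ≤ k then g (k - n) * h k else 0) ?_]
    · refine tsum_congr fun m => ?_
      simp [Nat.le_add_right]
    · intro k hk
      have hnk : n ≤ k := by
        by_contra hlt
        exact hk (if_neg hlt)
      exact ⟨k - n, by show n + (k - n) = k; omega⟩
  calc ∑' n : ℕ, ∑' m : ℕ, g m * h (n + m)
      = ∑' n : ℕ, ∑' k : ℕ, if n ≤ k then g (k - n) * h k else 0 :=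
        tsum_congr step1
    _ = ∑' k : ℕ, ∑' n : ℕ, if n ≤ k then g (k - n) * h k else 0 := ENNReal.tsum_comm
    _ = ∑' k : ℕ, (∑ m ∈ Finset.range (k + 1), g m) * h k := by
        refine tsum_congr fun k => ?_
        rw [tsum_eq_sum (s := Finset.range (k + 1))
          (fun n hn => if_neg (by simp at hn; omega))]
        have : ∀ n ∈ Finset.range (k + 1),
            (if n ≤ k then g (k - n) * h k else 0) = g (k - n) * h k := by
          intro n hn
          simp at hn
          rw [if_pos (by omega)]
        rw [Finset.sum_congr rfl this, ← Finset.sum_mul]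
        congr 1
        have := Finset.sum_range_reflect (fun j => g j) (k + 1)
        simpa using this

theorem copson_N_reverse_weighted (q l p : ℝ) (hq : 0 < q) (hq1 : q < 1) (hl : 0 < l)
    (hp0 : 0 < p) (hp1 : p < 1) (a : ℕ → ℝ≥0∞)
    (ha : ∃ n, a n ≠ 0) (hfin : (∑' n : ℕ, (a n) ^ p) ≠ ⊤) :
    ENNReal.ofReal ((1 - q ^ l) ^ (-p)) *
        ∑' n : ℕ, ENNReal.ofReal (1 - q ^ (l * (n : ℝ))) * (a n) ^ p
      < ∑' n : ℕ, ((ENNReal.ofReal q) ^ (-(l * (n : ℝ))) *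
          ∑' m : ℕ, (ENNReal.ofReal q) ^ (l * ((n : ℝ) + (m : ℝ))) * a (n + m)) ^ p := by
  -- basic facts about r = q ^ l
  set r : ℝ := q ^ l with hr_def
  have hr0 : 0 < r := Real.rpow_pos_of_pos hq l
  have hr1 : r < 1 := Real.rpow_lt_one hq.le hq1 hl
  have h1r0 : 0 < 1 - r := by linarith
  set R : ℝ≥0∞ := ENNReal.ofReal r with hR_def
  have hR0 : R ≠ 0 := (ENNReal.ofReal_pos.2 hr0).ne'
  have hRt : R ≠ ⊤ := ENNReal.ofReal_ne_top
  have hRlt1 : R < 1 := by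
    rw [hR_def, ← ENNReal.ofReal_one]
    exact (ENNReal.ofReal_lt_ofReal_iff one_pos).2 hr1
  have hq0' : (ENNReal.ofReal q) ≠ 0 := (ENNReal.ofReal_pos.2 hq).ne'
  have hqt' : (ENNReal.ofReal q) ≠ ⊤ := ENNReal.ofReal_ne_top
  -- rewrite q ^ (l * n) as r ^ n (real)
  have hrpow : ∀ n : ℕ, q ^ (l * (n : ℝ)) = r ^ n := by
    intro n
    rw [hr_def, Real.rpow_mul hq.le, Real.rpow_natCast]
  -- rewrite the inner sums on the RHS
  have hinner : ∀ n : ℕ, (ENNReal.ofReal q) ^ (-(l * (n : ℝ))) *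
      ∑' m : ℕ, (ENNReal.ofReal q) ^ (l * ((n : ℝ) + (m : ℝ))) * a (n + m)
      = ∑' m : ℕ, R ^ m * a (n + m) := by
    intro n
    rw [← ENNReal.tsum_mul_left]
    refine tsum_congr fun m => ?_
    rw [← mul_assoc, ← ENNReal.rpow_add _ _ hq0' hqt']
    have : -(l * (n : ℝ)) + l * ((n : ℝ) + (m : ℝ)) = l * (m : ℝ) := by ring
    rw [this]
    congr 1
    rw [ENNReal.rpow_mul, ENNReal.rpow_natCast, ENNReal.ofReal_rpow_of_pos hq]
  -- set up the constant D = (1 - R) ^ (1 - p)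
  have h1Rsub : (1 : ℝ≥0∞) - R = ENNReal.ofReal (1 - r) := by
    rw [ENNReal.ofReal_sub _ hr0.le, ENNReal.ofReal_one]
  set D : ℝ≥0∞ := ((1 : ℝ≥0∞) - R) ^ (1 - p) with hD_def
  have hD_eq : D = ENNReal.ofReal ((1 - r) ^ (1 - p)) := by
    rw [hD_def, h1Rsub, ENNReal.ofReal_rpow_of_pos h1r0]
  have hD0 : D ≠ 0 := by
    rw [hD_eq]
    exact (ENNReal.ofReal_pos.2 (Real.rpow_pos_of_pos h1r0 _)).ne'
  have hDt : D ≠ ⊤ := by rw [hD_eq]; exact ENNReal.ofReal_ne_top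
  -- Hölder step, summed over n
  have hB : ∀ n : ℕ, ∑' m : ℕ, R ^ m * a (n + m) ^ p
      ≤ D⁻¹ * (∑' m : ℕ, R ^ m * a (n + m)) ^ p := by
    intro n
    have := copson_holder_step hp0 hp1 hR0 hRt (fun m => a (n + m))
    rwa [ENNReal.tsum_geometric, ENNReal.inv_rpow, ← hD_def] at this
  have hsum : ∑' n : ℕ, ∑' m : ℕ, R ^ m * a (n + m) ^ p
      ≤ D⁻¹ * ∑' n : ℕ, (∑' m : ℕ, R ^ m * a (n + m)) ^ p := by
    rw [← ENNReal.tsum_mul_left]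
    exact ENNReal.tsum_le_tsum hB
  have hRHS : D * ∑' n : ℕ, ∑' m : ℕ, R ^ m * a (n + m) ^ p
      ≤ ∑' n : ℕ, (∑' m : ℕ, R ^ m * a (n + m)) ^ p := by
    calc D * ∑' n : ℕ, ∑' m : ℕ, R ^ m * a (n + m) ^ p
        ≤ D * (D⁻¹ * ∑' n : ℕ, (∑' m : ℕ, R ^ m * a (n + m)) ^ p) :=
          mul_le_mul_right hsum _
      _ = _ := by rw [← mul_assoc, ENNReal.mul_inv_cancel hD0 hDt, one_mul]
  -- partial geometric sums
  have hgeom : ∀ k : ℕ, (∑ m ∈ Finset.range (k + 1), R ^ m)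
      = ENNReal.ofReal ((1 - r ^ (k + 1)) / (1 - r)) := by
    intro k
    have hsum_eq : (∑ m ∈ Finset.range (k + 1), r ^ m) = (1 - r ^ (k + 1)) / (1 - r) := by
      rw [geom_sum_eq hr1.ne (k + 1)]
      rw [← neg_div_neg_eq]
      ring_nf
    rw [← hsum_eq, ENNReal.ofReal_sum_of_nonneg (fun i _ => pow_nonneg hr0.le i)]
    exact Finset.sum_congr rfl fun i _ => (ENNReal.ofReal_pow hr0.le i).symm
  -- coefficient computation
  have hcoef : ∀ k : ℕ, D * (∑ m ∈ Finset.range (k + 1), R ^ m)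
      = ENNReal.ofReal ((1 - r) ^ (-p) * (1 - r ^ (k + 1))) := by
    intro k
    rw [hgeom k, hD_eq, ← ENNReal.ofReal_mul (Real.rpow_nonneg (by linarith) _)]
    congr 1
    rw [show (1 : ℝ) - p = -p + 1 by ring, Real.rpow_add h1r0, Real.rpow_one]
    field_simp
  -- double sum reindexed
  have hdouble : ∑' n : ℕ, ∑' m : ℕ, R ^ m * a (n + m) ^ p
      = ∑' k : ℕ, (∑ m ∈ Finset.range (k + 1), R ^ m) * a k ^ p :=
    copson_swap_sum (fun m => R ^ m) (fun k => a k ^ p)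
  -- the two weighted sums to compare
  set f : ℕ → ℝ≥0∞ := fun n => ENNReal.ofReal ((1 - r) ^ (-p) * (1 - r ^ n)) * a n ^ p with hf_def
  set g : ℕ → ℝ≥0∞ := fun n => ENNReal.ofReal ((1 - r) ^ (-p) * (1 - r ^ (n + 1))) * a n ^ p
    with hg_def
  have hc0 : (0 : ℝ) < (1 - r) ^ (-p) := Real.rpow_pos_of_pos h1r0 _
  -- LHS of the goal equals ∑' f
  have hLHS : ENNReal.ofReal ((1 - q ^ l) ^ (-p)) *
      ∑' n : ℕ, ENNReal.ofReal (1 - q ^ (l * (n : ℝ))) * (a n) ^ p = ∑' n : ℕ, f n := by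
    rw [← ENNReal.tsum_mul_left]
    refine tsum_congr fun n => ?_
    rw [hf_def, ← mul_assoc, ← ENNReal.ofReal_mul hc0.le, hrpow n]
  -- ∑' f ≠ ⊤
  have hf_le : ∀ n : ℕ, f n ≤ ENNReal.ofReal ((1 - r) ^ (-p)) * a n ^ p := by
    intro n
    refine mul_le_mul_left (ENNReal.ofReal_le_ofReal ?_) _
    nlinarith [pow_nonneg hr0.le n]
  have hf_fin : (∑' n : ℕ, f n) ≠ ⊤ := by
    refine ne_top_of_le_ne_top ?_ (ENNReal.tsum_le_tsum hf_le)
    rw [ENNReal.tsum_mul_left]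
    exact ENNReal.mul_ne_top ENNReal.ofReal_ne_top hfin
  -- termwise f ≤ g
  have hfg : ∀ n : ℕ, f n ≤ g n := by
    intro n
    refine mul_le_mul_left (ENNReal.ofReal_le_ofReal ?_) _
    have : r ^ (n + 1) ≤ r ^ n :=
      (pow_lt_pow_right_of_lt_one₀ hr0 hr1 (Nat.lt_succ_self n)).le
    nlinarith
  -- strictness at the witness
  obtain ⟨i, hai⟩ := ha
  have hai_p0 : a i ^ p ≠ 0 := by
    simp [ENNReal.rpow_eq_zero_iff, hai, hp0.ne', not_lt.2 hp0.le]
  have hai_pt : a i ^ p ≠ ⊤ := by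
    intro h
    exact hfin (top_le_iff.mp (h ▸ ENNReal.le_tsum i))
  have hstrict : f i < g i := by
    rw [hf_def, hg_def]
    refine (ENNReal.mul_lt_mul_iff_left hai_p0 hai_pt).2 ?_
    refine (ENNReal.ofReal_lt_ofReal_iff ?_).2 ?_
    · have h1 : 0 < 1 - r ^ (i + 1) := by
        have : r ^ (i + 1) < 1 := pow_lt_one₀ hr0.le hr1 (Nat.succ_ne_zero i)
        linarith
      exact mul_pos hc0 h1
    · have : r ^ (i + 1) < r ^ i := pow_lt_pow_right_of_lt_one₀ hr0 hr1 (Nat.lt_succ_self i)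
      nlinarith
  have hlt : ∑' n : ℕ, f n < ∑' n : ℕ, g n :=
    ENNReal.tsum_lt_tsum hf_fin hfg hstrict
  -- ∑' g equals D * double sum
  have hg_eq : ∑' n : ℕ, g n = D * ∑' n : ℕ, ∑' m : ℕ, R ^ m * a (n + m) ^ p := by
    rw [hdouble, ← ENNReal.tsum_mul_left]
    refine tsum_congr fun n => ?_
    rw [hg_def, ← mul_assoc, hcoef n]
  -- put everything together
  calc ENNReal.ofReal ((1 - q ^ l) ^ (-p)) *
        ∑' n : ℕ, ENNReal.ofReal (1 - q ^ (l * (n : ℝ))) * (a n) ^ p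
      = ∑' n : ℕ, f n := hLHS
    _ < ∑' n : ℕ, g n := hlt
    _ = D * ∑' n : ℕ, ∑' m : ℕ, R ^ m * a (n + m) ^ p := hg_eq
    _ ≤ ∑' n : ℕ, (∑' m : ℕ, R ^ m * a (n + m)) ^ p := hRHS
    _ = ∑' n : ℕ, ((ENNReal.ofReal q) ^ (-(l * (n : ℝ))) *
          ∑' m : ℕ, (ENNReal.ofReal q) ^ (l * ((n : ℝ) + (m : ℝ))) * a (n + m)) ^ p := by
        exact tsum_congr fun n => by rw [hinner n]
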